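/- Let E ⊆ ℝⁿ × ℝ be open, let φ(x,t) = (x e^{−2t}, (1−e^{−4t})/4), let u ∈ C^{2,1}(φ(E)) have continuous first-order spatial derivatives, and set U(x,t) = u(φ(x,t)). Then U ∈ C^{2,1}(E) and at every point (x,t) ∈ E one has the identity ∂_t U − ΔU + 2x·∇U = e^{−4t} (∂_s u − Δ_y u)(φ(x,t)). Consequently, u is a classical temperature on φ(E) (i.e. ∂_s u = Δ_y u) if and only if U ∈ T_OU(E), and ∂_s u ≤ Δ_y u on φ(E) if and only if U ∈ T^sub_OU(E). -/

import Mathlib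

open Real MeasureTheory Set Filter
open scoped ENNReal

noncomputable section

/-- Space-time: `ℝⁿ × ℝ`. -/
abbrev Spt (n : ℕ) := EuclideanSpace ℝ (Fin n) × ℝ

/-- Partial derivative in the time variable. -/
def ptime {n : ℕ} (U : Spt n → ℝ) (z : Spt n) : ℝ :=
  deriv (fun τ => U (z.1, τ)) z.2

/-- Partial derivative in the `i`-th spatial variable. -/
def pspace {n : ℕ} (i : Fin n) (U : Spt n → ℝ) (z : Spt n) : ℝ :=
  deriv (fun a => U (WithLp.toLp 2 (Function.update z.1 i a), z.2)) (z.1 i)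

/-- Second partial derivative `∂²_{x_i x_j}`. -/
def pspace2 {n : ℕ} (i j : Fin n) (U : Spt n → ℝ) (z : Spt n) : ℝ :=
  pspace i (pspace j U) z

/-- Spatial Laplacian. -/
def lap {n : ℕ} (U : Spt n → ℝ) (z : Spt n) : ℝ := ∑ i, pspace2 i i U z

/-- `x · ∇U`. -/
def xgrad {n : ℕ} (U : Spt n → ℝ) (z : Spt n) : ℝ := ∑ i, z.1 i * pspace i U z

/-- `U ∈ C^{2,1}(E)`: the partials `∂_t U` and `∂²_{x_i x_j} U` exist and are continuous on `E`. -/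
structure C21 {n : ℕ} (E : Set (Spt n)) (U : Spt n → ℝ) : Prop where
  diff_t : ∀ z ∈ E, DifferentiableAt ℝ (fun τ => U (z.1, τ)) z.2
  cont_t : ContinuousOn (ptime U) E
  diff_x : ∀ z ∈ E, ∀ i : Fin n,
    DifferentiableAt ℝ (fun a => U (WithLp.toLp 2 (Function.update z.1 i a), z.2)) (z.1 i)
  diff_xx : ∀ z ∈ E, ∀ i j : Fin n,
    DifferentiableAt ℝ (fun a => pspace j U (WithLp.toLp 2 (Function.update z.1 i a), z.2)) (z.1 i)
  cont_xx : ∀ i j : Fin n, ContinuousOn (pspace2 i j U) E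

/-- Classical temperatures: `∂_t u = Δu`. -/
def IsHeat {n : ℕ} (E : Set (Spt n)) (u : Spt n → ℝ) : Prop :=
  ∀ z ∈ E, ptime u z = lap u z

/-- Classical subtemperatures: `∂_t u ≤ Δu`. -/
def IsSubHeat {n : ℕ} (E : Set (Spt n)) (u : Spt n → ℝ) : Prop :=
  ∀ z ∈ E, ptime u z ≤ lap u z

/-- Ornstein-Uhlenbeck temperatures: `∂_t U = ΔU - 2 x·∇U`. -/
def IsOU {n : ℕ} (E : Set (Spt n)) (U : Spt n → ℝ) : Prop :=
  ∀ z ∈ E, ptime U z = lap U z - 2 * xgrad U z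

/-- Ornstein-Uhlenbeck subtemperatures: `∂_t U ≤ ΔU - 2 x·∇U`. -/
def IsSubOU {n : ℕ} (E : Set (Spt n)) (U : Spt n → ℝ) : Prop :=
  ∀ z ∈ E, ptime U z ≤ lap U z - 2 * xgrad U z

/-- Hermite temperatures: `∂_t U = ΔU - |x|² U`. -/
def IsH {n : ℕ} (E : Set (Spt n)) (U : Spt n → ℝ) : Prop :=
  ∀ z ∈ E, ptime U z = lap U z - ‖z.1‖ ^ 2 * U z

/-- Hermite subtemperatures: `∂_t U ≤ ΔU - |x|² U`. -/
def IsSubH {n : ℕ} (E : Set (Spt n)) (U : Spt n → ℝ) : Prop :=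
  ∀ z ∈ E, ptime U z ≤ lap U z - ‖z.1‖ ^ 2 * U z

/-- The OU/Hermite heat ball `Ξ(x₀,t₀;r)`. -/
def XiBall (n : ℕ) (x₀ : EuclideanSpace ℝ (Fin n)) (t₀ r : ℝ) : Set (Spt n) :=
  {z | z.2 < t₀ ∧ Real.exp (-4 * z.2) - Real.exp (-4 * t₀) < 4 * r ∧
    ‖Real.exp (-2 * z.2) • z.1 - Real.exp (-2 * t₀) • x₀‖ ^ 2 <
      ((n : ℝ) / 2) * (Real.exp (-4 * z.2) - Real.exp (-4 * t₀)) *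
        Real.log (4 * r / (Real.exp (-4 * z.2) - Real.exp (-4 * t₀)))}

/-- The kernel `K^OU_{x,t}(y,s)`. -/
def KOU (n : ℕ) (x : EuclideanSpace ℝ (Fin n)) (t : ℝ) (y : EuclideanSpace ℝ (Fin n)) (s : ℝ) : ℝ :=
  8 * Real.exp (-2 * ((n : ℝ) + 2) * s) *
    ‖Real.exp (-2 * t) • x - Real.exp (-2 * s) • y‖ ^ 2 /
      (Real.exp (-4 * t) - Real.exp (-4 * s)) ^ 2

/-- The kernel `K^H_{x,t}(y,s)`. -/
def KH (n : ℕ) (x : EuclideanSpace ℝ (Fin n)) (t : ℝ) (y : EuclideanSpace ℝ (Fin n)) (s : ℝ) : ℝ :=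
  Real.exp ((n : ℝ) * (s - t)) * Real.exp ((‖y‖ ^ 2 - ‖x‖ ^ 2) / 2) * KOU n x t y s

/-- `Λ(z₀,E)`: points reachable from `z₀` by a polygonal path in `E` along which
the time variable strictly decreases. -/
def Lambda {n : ℕ} (E : Set (Spt n)) (z₀ : Spt n) : Set (Spt n) :=
  {q | ∃ m : ℕ, 0 < m ∧ ∃ P : ℕ → Spt n, P 0 = z₀ ∧ P m = q ∧
    (∀ k < m, segment ℝ (P k) (P (k + 1)) ⊆ E) ∧
    (∀ k < m, (P (k + 1)).2 < (P k).2)}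

/-- The map `φ(x,t) = (x e^{-2t}, (1-e^{-4t})/4)`. -/
def phiMap {n : ℕ} (z : Spt n) : Spt n :=
  (Real.exp (-2 * z.2) • z.1, (1 - Real.exp (-4 * z.2)) / 4)

/-- The Hermite-cylindrical set `Γ_R(x₀,t₀)`. -/
def GammaCyl (n : ℕ) (x₀ : EuclideanSpace ℝ (Fin n)) (t₀ R : ℝ) : Set (Spt n) :=
  {z | ‖Real.exp (2 * (t₀ - z.2)) • z.1 - x₀‖ < R ∧ t₀ - R ^ 2 < z.2 ∧ z.2 < t₀}

/-- The measure `dν = e^{-2(n+2)t} dx dt`. -/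
def nuMeas (n : ℕ) : Measure (Spt n) :=
  volume.withDensity fun z => ENNReal.ofReal (Real.exp (-2 * ((n : ℝ) + 2) * z.2))

/-- The open band `ℝⁿ × (0, T₀)` for `T₀ ∈ (0,∞]`. -/
def band (n : ℕ) (T₀ : ℝ≥0∞) : Set (Spt n) :=
  {z | 0 < z.2 ∧ ENNReal.ofReal z.2 < T₀}

/-- The closed-below band `ℝⁿ × [0, T₀)` for `T₀ ∈ (0,∞]`. -/
def bandCl (n : ℕ) (T₀ : ℝ≥0∞) : Set (Spt n) :=
  {z | 0 ≤ z.2 ∧ ENNReal.ofReal z.2 < T₀}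

end

lemma deriv_comp_mul_left'' {c : ℝ} (hc : c ≠ 0) (g : ℝ → ℝ) (a : ℝ) :
    deriv (fun b => g (c * b)) a = c * deriv g (c * a) := by
  by_cases h : DifferentiableAt ℝ g (c * a)
  · have hm : HasDerivAt (fun b : ℝ => c * b) c a := by
      simpa using (hasDerivAt_id a).const_mul c
    have hd := (h.hasDerivAt.comp a hm).deriv
    simp only [Function.comp_def] at hd
    rw [hd]; ring
  · have h2 : ¬ DifferentiableAt ℝ (fun b => g (c * b)) a := by
      intro hd
      apply h
      have : g = (fun b => g (c * b)) ∘ (fun y => c⁻¹ * y) := by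
        funext y; simp [Function.comp, mul_inv_cancel_left₀ hc]
      rw [this]
      have : DifferentiableAt ℝ (fun y : ℝ => c⁻¹ * y) (c * a) := by fun_prop
      exact DifferentiableAt.comp (c*a) (by simpa [inv_mul_cancel_left₀ hc] using hd) this
    rw [deriv_zero_of_not_differentiableAt h, deriv_zero_of_not_differentiableAt h2, mul_zero]

lemma euclid_dist_coord_le {n : ℕ} (x y : EuclideanSpace ℝ (Fin n)) (i : Fin n) :
    dist (x i) (y i) ≤ dist x y := by
  rw [EuclideanSpace.dist_eq]
  have h1 : dist (x i) (y i) = Real.sqrt (dist (x i) (y i) ^ 2) := by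
    rw [Real.sqrt_sq dist_nonneg]
  rw [h1]
  apply Real.sqrt_le_sqrt
  exact Finset.single_le_sum (f := fun j => dist (x j) (y j) ^ 2)
    (fun j _ => by positivity) (Finset.mem_univ i)

lemma euclid_dist_le_of_coords {n : ℕ} {x y x' y' : EuclideanSpace ℝ (Fin n)}
    (h : ∀ i, dist (x i) (y i) ≤ dist (x' i) (y' i)) : dist x y ≤ dist x' y' := by
  rw [EuclideanSpace.dist_eq, EuclideanSpace.dist_eq]
  apply Real.sqrt_le_sqrt
  refine Finset.sum_le_sum fun i _ => ?_
  have h1 := h i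
  have h2 : (0:ℝ) ≤ dist (x i) (y i) := dist_nonneg
  have h3 : (0:ℝ) ≤ dist (x' i) (y' i) := dist_nonneg
  nlinarith

def eupdate {n : ℕ} (x : EuclideanSpace ℝ (Fin n)) (i : Fin n) (a : ℝ) :
    EuclideanSpace ℝ (Fin n) := WithLp.toLp 2 (Function.update x i a)

lemma key_hasFDerivAt {n : ℕ} (v : Spt n → ℝ) (Ω : Set (Spt n)) (hΩ : IsOpen Ω)
    (z₀ : Spt n) (hz₀ : z₀ ∈ Ω)
    (hdiff : ∀ w ∈ Ω, ∀ i : Fin n,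
      DifferentiableAt ℝ (fun a => v (WithLp.toLp 2 (Function.update w.1 i a), w.2)) (w.1 i))
    (hcont : ∀ i : Fin n, ContinuousOn (pspace i v) Ω)
    (hdt : DifferentiableAt ℝ (fun τ => v (z₀.1, τ)) z₀.2)
    (L : Spt n →L[ℝ] ℝ)
    (hL : ∀ w : Spt n, L w = (∑ i, pspace i v z₀ * w.1 i) + ptime v z₀ * w.2) :
    HasFDerivAt v L z₀ := by
  have hA : (fun z : Spt n => v z - v (z₀.1, z.2) - ∑ i, pspace i v z₀ * (z.1 i - z₀.1 i))
      =o[nhds z₀] fun z => z - z₀ := by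
    rw [Asymptotics.isLittleO_iff]
    intro c hc
    have hε0 : (0:ℝ) < c / (n + 1) := by positivity
    set ε := c / ((n:ℝ) + 1) with hεdef
    have hev : ∀ᶠ w in nhds z₀, w ∈ Ω ∧
        ∀ i : Fin n, dist (pspace i v w) (pspace i v z₀) ≤ ε := by
      refine Filter.Eventually.and (hΩ.mem_nhds hz₀ : ∀ᶠ w in nhds z₀, w ∈ Ω) ?_
      rw [Filter.eventually_all]
      intro i
      have hca : ContinuousAt (pspace i v) z₀ := (hcont i).continuousAt (hΩ.mem_nhds hz₀)
      exact (Metric.tendsto_nhds.mp hca ε hε0).mono fun w hw => le_of_lt hw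
    rcases Metric.eventually_nhds_iff_ball.mp hev with ⟨δ, hδ0, hδ⟩
    rw [Metric.eventually_nhds_iff_ball]
    refine ⟨δ, hδ0, fun z hz => ?_⟩
    have hdz : dist z z₀ < δ := by simpa [Metric.mem_ball] using hz
    have hdist1 : dist z.1 z₀.1 ≤ dist z z₀ := by rw [Prod.dist_eq]; exact le_max_left _ _
    have hdist2 : dist z.2 z₀.2 ≤ dist z z₀ := by rw [Prod.dist_eq]; exact le_max_right _ _
    set W : ℕ → EuclideanSpace ℝ (Fin n) :=
      fun k => WithLp.toLp 2 (fun j : Fin n => if (j:ℕ) < k then z.1 j else z₀.1 j) with hWdef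
    have hW0 : W 0 = z₀.1 := by ext j; simp [hWdef]
    have hWn : W n = z.1 := by ext j; simp [hWdef, j.isLt]
    have hmem : ∀ (k : ℕ) (hk : k < n) (a : ℝ), a ∈ Set.uIcc (z₀.1 ⟨k,hk⟩) (z.1 ⟨k,hk⟩) →
        (eupdate (W k) ⟨k,hk⟩ a, z.2) ∈ Metric.ball z₀ δ := by
      intro k hk a ha
      have hcoord : ∀ j, dist ((eupdate (W k) ⟨k,hk⟩ a) j) (z₀.1 j)
          ≤ dist (z.1 j) (z₀.1 j) := by
        intro j
        show dist ((Function.update (W k) ⟨k,hk⟩ a) j) (z₀.1 j) ≤ _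
        by_cases hj : j = (⟨k,hk⟩ : Fin n)
        · subst hj
          rw [Function.update_self]
          have := Real.dist_le_of_mem_uIcc ha (Set.left_mem_uIcc)
          rwa [dist_comm (z₀.1 _) (z.1 _)] at this
        · rw [Function.update_of_ne hj]
          show dist (if (j:ℕ) < k then z.1 j else z₀.1 j) (z₀.1 j) ≤ _
          by_cases h2 : (j:ℕ) < k
          · simp [h2]
          · simp [h2, dist_nonneg]
      have h1 : dist (eupdate (W k) ⟨k,hk⟩ a) z₀.1
          ≤ dist z.1 z₀.1 := euclid_dist_le_of_coords hcoord
      rw [Metric.mem_ball, Prod.dist_eq]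
      exact max_lt (lt_of_le_of_lt (h1.trans hdist1) hdz) (lt_of_le_of_lt hdist2 hdz)
    have hstep : ∀ (k : ℕ) (hk : k < n),
        |v (W (k+1), z.2) - v (W k, z.2) -
          pspace ⟨k,hk⟩ v z₀ * (z.1 ⟨k,hk⟩ - z₀.1 ⟨k,hk⟩)|
          ≤ ε * |z.1 ⟨k,hk⟩ - z₀.1 ⟨k,hk⟩| := by
      intro k hk
      set i : Fin n := ⟨k,hk⟩ with hi
      have hWk : eupdate (W k) i (z₀.1 i) = W k := by
        ext j
        show Function.update (W k) i (z₀.1 i) j = W k j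
        rcases eq_or_ne j i with hj | hj
        · rw [hj, Function.update_self]
          show z₀.1 i = if ((i:ℕ)) < k then z.1 i else z₀.1 i
          simp [hi]
        · rw [Function.update_of_ne hj]
      have hWk1 : W (k+1) = eupdate (W k) i (z.1 i) := by
        ext j
        show W (k+1) j = Function.update (W k) i (z.1 i) j
        rcases eq_or_ne j i with hj | hj
        · rw [hj, Function.update_self]
          show (if ((i:ℕ)) < k + 1 then z.1 i else z₀.1 i) = z.1 i
          simp [hi]
        · rw [Function.update_of_ne hj]
          show (if ((j:ℕ)) < k + 1 then z.1 j else z₀.1 j) = if ((j:ℕ)) < k then z.1 j else z₀.1 j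
          have hjk : (j:ℕ) ≠ k := fun h => hj (Fin.ext (by simpa [hi] using h))
          have h3 : ((j:ℕ) < k+1) ↔ ((j:ℕ) < k) := by omega
          simp [h3]
      set f : ℝ → ℝ := fun a => v (eupdate (W k) i a, z.2) with hf
      set F : ℝ → ℝ := fun a => pspace i v (eupdate (W k) i a, z.2) with hF
      have hder : ∀ a ∈ Set.uIcc (z₀.1 i) (z.1 i), HasDerivAt f (F a) a := by
        intro a ha
        have hmem' := hmem k hk a ha
        obtain ⟨hΩw, _⟩ := hδ _ hmem'
        have hd := hdiff _ hΩw i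
        simp only [← hi, eupdate, Function.update_idem, Function.update_self] at hd
        have hFa : F a = deriv f a := by
          simp only [hF, hf, pspace, eupdate, Function.update_idem, Function.update_self]
        rw [hFa]
        exact hd.hasDerivAt
      by_cases hne : z.1 i = z₀.1 i
      · have hWW : W (k+1) = W k := by rw [hWk1, hne, hWk]
        rw [hWW, hne]
        simp
      · have hmvt : ∃ ξ ∈ Set.uIcc (z₀.1 i) (z.1 i),
            f (z.1 i) - f (z₀.1 i) = F ξ * (z.1 i - z₀.1 i) := by
          rcases lt_or_gt_of_ne hne with hlt | hgt
          · have hsub : Set.Icc (z.1 i) (z₀.1 i) ⊆ Set.uIcc (z₀.1 i) (z.1 i) := by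
              rw [Set.uIcc_comm]; exact Set.Icc_subset_uIcc
            have hcontOn : ContinuousOn f (Set.Icc (z.1 i) (z₀.1 i)) := fun x hx =>
              ((hder x (hsub hx)).continuousAt).continuousWithinAt
            obtain ⟨ξ, hξ, hξeq⟩ := exists_hasDerivAt_eq_slope f F hlt hcontOn
              (fun x hx => hder x (hsub (Set.Ioo_subset_Icc_self hx)))
            refine ⟨ξ, hsub (Set.Ioo_subset_Icc_self hξ), ?_⟩
            rw [eq_div_iff (sub_ne_zero.mpr hlt.ne')] at hξeq
            linear_combination hξeq
          · have hsub : Set.Icc (z₀.1 i) (z.1 i) ⊆ Set.uIcc (z₀.1 i) (z.1 i) :=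
              Set.Icc_subset_uIcc
            have hcontOn : ContinuousOn f (Set.Icc (z₀.1 i) (z.1 i)) := fun x hx =>
              ((hder x (hsub hx)).continuousAt).continuousWithinAt
            obtain ⟨ξ, hξ, hξeq⟩ := exists_hasDerivAt_eq_slope f F hgt hcontOn
              (fun x hx => hder x (hsub (Set.Ioo_subset_Icc_self hx)))
            refine ⟨ξ, hsub (Set.Ioo_subset_Icc_self hξ), ?_⟩
            rw [eq_div_iff (sub_ne_zero.mpr hgt.ne')] at hξeq
            linear_combination -hξeq
        obtain ⟨ξ, hξ, heq⟩ := hmvt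
        have h1 : v (W (k+1), z.2) = f (z.1 i) := by rw [hWk1]
        have h2 : v (W k, z.2) = f (z₀.1 i) := by rw [← hWk]
        rw [h1, h2, heq]
        have hclose := (hδ _ (hmem k hk ξ hξ)).2 i
        have hFc : |F ξ - pspace i v z₀| ≤ ε := by
          simpa [Real.dist_eq, hF] using hclose
        calc |F ξ * (z.1 i - z₀.1 i) - pspace i v z₀ * (z.1 i - z₀.1 i)|
            = |F ξ - pspace i v z₀| * |z.1 i - z₀.1 i| := by rw [← sub_mul, abs_mul]
          _ ≤ ε * |z.1 i - z₀.1 i| :=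
              mul_le_mul_of_nonneg_right hFc (abs_nonneg _)
    have htel : v (z.1, z.2) - v (z₀.1, z.2) =
        ∑ k ∈ Finset.range n, (v (W (k+1), z.2) - v (W k, z.2)) := by
      rw [Finset.sum_range_sub (fun k => v (W k, z.2))]
      rw [hWn, hW0]
    set d : ℕ → ℝ := fun k => if hk : k < n then
      pspace ⟨k,hk⟩ v z₀ * (z.1 ⟨k,hk⟩ - z₀.1 ⟨k,hk⟩) else 0 with hd
    have hsum1 : (∑ i : Fin n, pspace i v z₀ * (z.1 i - z₀.1 i)) =
        ∑ k ∈ Finset.range n, d k := by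
      rw [← Fin.sum_univ_eq_sum_range]
      exact Finset.sum_congr rfl fun i _ => by simp [hd, i.isLt]
    have hvz : v z = v (z.1, z.2) := by rw [Prod.mk.eta]
    have hmain : |v z - v (z₀.1, z.2) - ∑ i : Fin n, pspace i v z₀ * (z.1 i - z₀.1 i)|
        ≤ c * ‖z - z₀‖ := by
      rw [hvz, hsum1, htel, ← Finset.sum_sub_distrib]
      have hcoordnorm : ∀ (k : ℕ) (hk : k < n),
          |z.1 ⟨k,hk⟩ - z₀.1 ⟨k,hk⟩| ≤ ‖z - z₀‖ := by
        intro k hk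
        have h1 := euclid_dist_coord_le z.1 z₀.1 ⟨k,hk⟩
        rw [Real.dist_eq] at h1
        calc |z.1 ⟨k,hk⟩ - z₀.1 ⟨k,hk⟩| ≤ dist z.1 z₀.1 := h1
          _ ≤ dist z z₀ := hdist1
          _ = ‖z - z₀‖ := dist_eq_norm z z₀
      calc |∑ k ∈ Finset.range n, ((v (W (k+1), z.2) - v (W k, z.2)) - d k)|
          ≤ ∑ k ∈ Finset.range n, |(v (W (k+1), z.2) - v (W k, z.2)) - d k| :=
            Finset.abs_sum_le_sum_abs _ _
        _ ≤ ∑ _k ∈ Finset.range n, ε * ‖z - z₀‖ := by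
            refine Finset.sum_le_sum fun k hk => ?_
            have hk' := Finset.mem_range.mp hk
            have hs := hstep k hk'
            rw [hd]
            simp only [dif_pos hk']
            refine hs.trans ?_
            exact mul_le_mul_of_nonneg_left (hcoordnorm k hk') (le_of_lt hε0)
        _ = (n:ℝ) * (ε * ‖z - z₀‖) := by
            rw [Finset.sum_const, Finset.card_range, nsmul_eq_mul]
        _ ≤ c * ‖z - z₀‖ := by
            have h1 : (0:ℝ) < (n:ℝ)+1 := by positivity
            have hnc : (n:ℝ) * ε ≤ c := by
              rw [hεdef, mul_div_assoc', div_le_iff₀ h1]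
              nlinarith
            nlinarith [norm_nonneg (z - z₀)]
    simpa using hmain
  have hB : (fun z : Spt n => v (z₀.1, z.2) - v z₀ - ptime v z₀ * (z.2 - z₀.2))
      =o[nhds z₀] fun z => z - z₀ := by
    have h1 : HasDerivAt (fun τ => v (z₀.1, τ)) (ptime v z₀) z₀.2 := by
      simpa [ptime] using hdt.hasDerivAt
    have h2 := hasDerivAt_iff_isLittleO.mp h1
    have h3 := h2.comp_tendsto (continuous_snd.tendsto z₀)
    have h4 : (fun z : Spt n => z.2 - z₀.2) =O[nhds z₀] fun z => z - z₀ := by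
      apply Asymptotics.isBigO_of_le
      intro z
      have := norm_snd_le (z - z₀)
      simpa using this
    have h5 := h3.trans_isBigO h4
    have heq2 : (fun z : Spt n => v (z₀.1, z.2) - v z₀ - ptime v z₀ * (z.2 - z₀.2)) =
        ((fun τ => v (z₀.1, τ) - v (z₀.1, z₀.2) - (τ - z₀.2) • ptime v z₀) ∘
          fun z : Spt n => z.2) := by
      funext z
      simp [Function.comp, Prod.mk.eta, smul_eq_mul]
      ring
    rw [heq2]
    exact h5
  rw [hasFDerivAt_iff_isLittleO]
  have heq : (fun z : Spt n => v z - v z₀ - L (z - z₀)) =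
      (fun z : Spt n => (v z - v (z₀.1, z.2) - ∑ i, pspace i v z₀ * (z.1 i - z₀.1 i)) +
        (v (z₀.1, z.2) - v z₀ - ptime v z₀ * (z.2 - z₀.2))) := by
    funext z
    have h1 : L (z - z₀) = (∑ i, pspace i v z₀ * (z.1 i - z₀.1 i)) +
        ptime v z₀ * (z.2 - z₀.2) := by
      rw [hL]
      rfl
    rw [h1]; ring
  rw [heq]
  exact hA.add hB

lemma phiMap_continuous {n : ℕ} : Continuous (phiMap : Spt n → Spt n) := by
  unfold phiMap
  refine Continuous.prodMk ?_ ?_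
  · exact (Real.continuous_exp.comp (by fun_prop)).smul continuous_fst
  · fun_prop

lemma isOpen_phiMap_image {n : ℕ} {E : Set (Spt n)} (hE : IsOpen E) :
    IsOpen (phiMap '' E) := by
  classical
  set S : Set (Spt n) := {w | w.2 < 1/4} with hS
  set ψ : Spt n → Spt n :=
    fun w => ((Real.sqrt (1 - 4*w.2))⁻¹ • w.1, -(1/4) * Real.log (1 - 4*w.2)) with hψ
  have himg : phiMap '' E = S ∩ ψ ⁻¹' E := by
    ext w
    constructor
    · rintro ⟨z, hz, rfl⟩
      have hpos : (0:ℝ) < Real.exp (-4*z.2) := Real.exp_pos _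
      constructor
      · show (1 - Real.exp (-4 * z.2))/4 < 1/4
        linarith
      · show ψ (phiMap z) ∈ E
        have h14 : 1 - 4 * ((1 - Real.exp (-4*z.2))/4) = Real.exp (-4*z.2) := by ring
        have hsq : Real.sqrt (Real.exp (-4*z.2)) = Real.exp (-2*z.2) := by
          rw [show (-4*z.2) = (-2*z.2) + (-2*z.2) by ring, Real.exp_add,
            Real.sqrt_mul_self (Real.exp_nonneg _)]
        have hval : ψ (phiMap z) = z := by
          have h2 : (phiMap z).2 = (1 - Real.exp (-4*z.2))/4 := rfl
          apply Prod.ext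
          · show (Real.sqrt (1 - 4*(phiMap z).2))⁻¹ • (phiMap z).1 = z.1
            rw [h2, h14, hsq]
            show (Real.exp (-2*z.2))⁻¹ • (Real.exp (-2*z.2) • z.1) = z.1
            rw [smul_smul, inv_mul_cancel₀ (Real.exp_ne_zero _), one_smul]
          · show -(1/4) * Real.log (1 - 4*(phiMap z).2) = z.2
            rw [h2, h14, Real.log_exp]; ring
        rw [hval]; exact hz
    · rintro ⟨hw1, hw2⟩
      refine ⟨ψ w, hw2, ?_⟩
      have hp : (0:ℝ) < 1 - 4*w.2 := by
        have : w.2 < 1/4 := hw1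
        linarith
      have ht : (ψ w).2 = -(1/4) * Real.log (1 - 4*w.2) := rfl
      have he4 : Real.exp (-4*(ψ w).2) = 1 - 4*w.2 := by
        rw [ht, show -4 * (-(1/4) * Real.log (1 - 4*w.2)) = Real.log (1 - 4*w.2) by ring,
          Real.exp_log hp]
      have he2 : Real.exp (-2*(ψ w).2) = Real.sqrt (1 - 4*w.2) := by
        rw [ht, show -2 * (-(1/4) * Real.log (1 - 4*w.2)) = Real.log (1 - 4*w.2) * (1/2) by ring]
        rw [Real.sqrt_eq_rpow, Real.rpow_def_of_pos hp]
      apply Prod.ext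
      · show Real.exp (-2*(ψ w).2) • (ψ w).1 = w.1
        rw [he2]
        show Real.sqrt (1 - 4*w.2) • ((Real.sqrt (1 - 4*w.2))⁻¹ • w.1) = w.1
        rw [smul_smul, mul_inv_cancel₀ (ne_of_gt (Real.sqrt_pos.mpr hp)), one_smul]
      · show (1 - Real.exp (-4*(ψ w).2))/4 = w.2
        rw [he4]; ring
  rw [himg]
  have hSopen : IsOpen S := by
    have : S = Prod.snd ⁻¹' (Set.Iio (1/4 : ℝ)) := rfl
    rw [this]
    exact isOpen_Iio.preimage continuous_snd
  have hψc : ContinuousOn ψ S := by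
    intro w hw
    have hp : (0:ℝ) < 1 - 4*w.2 := by
      have : w.2 < 1/4 := hw
      linarith
    apply ContinuousAt.continuousWithinAt
    apply ContinuousAt.prodMk
    · refine ContinuousAt.smul (f := fun w : Spt n => (Real.sqrt (1 - 4*w.2))⁻¹) ?_ (continuousAt_fst : ContinuousAt (fun w : Spt n => w.1) w)
      refine ContinuousAt.inv₀ ?_ (ne_of_gt (Real.sqrt_pos.mpr hp))
      exact Real.continuous_sqrt.continuousAt.comp
        (by fun_prop : ContinuousAt (fun w : Spt n => 1 - 4*w.2) w)
    · refine continuousAt_const.mul ?_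
      have h2 : ContinuousAt (fun w : Spt n => 1 - 4*w.2) w := by fun_prop
      exact h2.log (ne_of_gt hp)
  exact hψc.isOpen_inter_preimage hSopen hE

lemma update_phi {n : ℕ} (z : Spt n) (i : Fin n) (a : ℝ) :
    phiMap (WithLp.toLp 2 (Function.update z.1 i a), z.2) =
      (WithLp.toLp 2 (Function.update ((phiMap z).1) i (Real.exp (-2*z.2) * a)), (phiMap z).2) := by
  apply Prod.ext
  · show Real.exp (-2*z.2) • WithLp.toLp 2 (Function.update z.1 i a) = _
    ext j
    show Real.exp (-2*z.2) * (Function.update z.1 i a j) =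
      Function.update (Real.exp (-2*z.2) • z.1 : EuclideanSpace ℝ (Fin n)) i
        (Real.exp (-2*z.2)*a) j
    rcases eq_or_ne j i with hj|hj
    · rw [hj, Function.update_self, Function.update_self]
    · rw [Function.update_of_ne hj, Function.update_of_ne hj]
      rfl
  · rfl

lemma pspace_transfer {n : ℕ} (u U : Spt n → ℝ) (hUdef : ∀ z, U z = u (phiMap z))
    (i : Fin n) (w : Spt n) :
    pspace i U w = Real.exp (-2 * w.2) * pspace i u (phiMap w) := by
  have hfun : (fun a => U (WithLp.toLp 2 (Function.update w.1 i a), w.2)) =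
      (fun a => (fun b => u (WithLp.toLp 2 (Function.update ((phiMap w).1) i b), (phiMap w).2))
        (Real.exp (-2*w.2) * a)) := by
    funext a
    rw [hUdef, update_phi]
  show deriv (fun a => U (WithLp.toLp 2 (Function.update w.1 i a), w.2)) (w.1 i) = _
  rw [hfun, deriv_comp_mul_left'' (Real.exp_ne_zero (-2*w.2))
      (fun b => u (WithLp.toLp 2 (Function.update ((phiMap w).1) i b), (phiMap w).2)) (w.1 i)]
  show _ = Real.exp (-2*w.2) * deriv
    (fun b => u (WithLp.toLp 2 (Function.update ((phiMap w).1) i b), (phiMap w).2)) ((phiMap w).1 i)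
  rfl

lemma exp_sq {t : ℝ} : Real.exp (-2*t) * Real.exp (-2*t) = Real.exp (-4*t) := by
  rw [← Real.exp_add]; congr 1; ring

lemma pspace2_transfer {n : ℕ} (u U : Spt n → ℝ) (hUdef : ∀ z, U z = u (phiMap z))
    (i j : Fin n) (w : Spt n) :
    pspace2 i j U w = Real.exp (-4 * w.2) * pspace2 i j u (phiMap w) := by
  have h1 : (fun a => pspace j U (WithLp.toLp 2 (Function.update w.1 i a), w.2)) =
      (fun a => Real.exp (-2*w.2) *
        (fun b => pspace j u (WithLp.toLp 2 (Function.update ((phiMap w).1) i b), (phiMap w).2))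
          (Real.exp (-2*w.2) * a)) := by
    funext a
    rw [pspace_transfer u U hUdef j (WithLp.toLp 2 (Function.update w.1 i a), w.2)]
    show Real.exp (-2*w.2) * pspace j u (phiMap (WithLp.toLp 2 (Function.update w.1 i a), w.2)) = _
    rw [update_phi]
  show deriv (fun a => pspace j U (WithLp.toLp 2 (Function.update w.1 i a), w.2)) (w.1 i) = _
  rw [h1, deriv_const_mul_field,
    deriv_comp_mul_left'' (Real.exp_ne_zero (-2*w.2))
      (fun b => pspace j u (WithLp.toLp 2 (Function.update ((phiMap w).1) i b), (phiMap w).2)) (w.1 i),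
    ← mul_assoc, exp_sq]
  congr 1

lemma curve_hasDerivAt {n : ℕ} (z : Spt n) :
    HasDerivAt (fun τ => phiMap ((z.1, τ) : Spt n))
      ((((Real.exp (-2*z.2) * (-2)) • z.1 : EuclideanSpace ℝ (Fin n)),
        Real.exp (-4*z.2)) : Spt n) z.2 := by
  have hc1 : HasDerivAt (fun τ : ℝ => (Real.exp (-2*τ) • z.1 : EuclideanSpace ℝ (Fin n)))
      ((Real.exp (-2*z.2) * (-2)) • z.1) z.2 := by
    have h0 : HasDerivAt (fun τ : ℝ => -2*τ) (-2) z.2 := by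
      simpa using (hasDerivAt_id z.2).const_mul (-2)
    exact (h0.exp).smul_const z.1
  have hc2 : HasDerivAt (fun τ : ℝ => (1 - Real.exp (-4*τ))/4) (Real.exp (-4*z.2)) z.2 := by
    have h0 : HasDerivAt (fun τ : ℝ => -4*τ) (-4) z.2 := by
      simpa using (hasDerivAt_id z.2).const_mul (-4)
    have h2 := (h0.exp.const_sub 1).div_const 4
    rw [show Real.exp (-4*z.2) = -(Real.exp (-4*z.2) * -4)/4 by ring]
    exact h2
  exact hc1.prodMk hc2

-- ContinuousLinearMap for the gradient
noncomputable def gradCLM {n : ℕ} (g : Fin n → ℝ) (t : ℝ) : Spt n →L[ℝ] ℝ :=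
  (∑ i : Fin n, g i • ((EuclideanSpace.proj i).comp
    (ContinuousLinearMap.fst ℝ (EuclideanSpace ℝ (Fin n)) ℝ))) +
    t • ContinuousLinearMap.snd ℝ (EuclideanSpace ℝ (Fin n)) ℝ

lemma gradCLM_apply {n : ℕ} (g : Fin n → ℝ) (t : ℝ) (w : Spt n) :
    gradCLM g t w = (∑ i, g i * w.1 i) + t * w.2 := by
  simp [gradCLM, ContinuousLinearMap.sum_apply]


lemma ptime_transfer {n : ℕ} {E : Set (Spt n)} (hE' : IsOpen (phiMap '' E))
    (u U : Spt n → ℝ) (hUdef : ∀ z, U z = u (phiMap z))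
    (hdiffx : ∀ w ∈ phiMap '' E, ∀ i : Fin n,
      DifferentiableAt ℝ (fun a => u (WithLp.toLp 2 (Function.update w.1 i a), w.2)) (w.1 i))
    (hux : ∀ i : Fin n, ContinuousOn (pspace i u) (phiMap '' E))
    (hdifft : ∀ w ∈ phiMap '' E, DifferentiableAt ℝ (fun τ => u (w.1, τ)) w.2)
    (z : Spt n) (hz : z ∈ E) :
    HasDerivAt (fun τ => U (z.1, τ))
      ((∑ i, pspace i u (phiMap z) * ((Real.exp (-2*z.2) * (-2)) * z.1 i)) +
        ptime u (phiMap z) * Real.exp (-4*z.2)) z.2 := by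
  have hmem : phiMap z ∈ phiMap '' E := ⟨z, hz, rfl⟩
  have hF : HasFDerivAt u
      (gradCLM (fun i => pspace i u (phiMap z)) (ptime u (phiMap z))) (phiMap z) :=
    key_hasFDerivAt u (phiMap '' E) hE' (phiMap z) hmem hdiffx hux (hdifft _ hmem) _
      (fun w => gradCLM_apply _ _ w)
  have hcurve := curve_hasDerivAt z
  have hcomp := hF.comp_hasDerivAt z.2 hcurve
  have hfeq : (fun τ => U (z.1, τ)) = (fun τ => u (phiMap ((z.1, τ) : Spt n))) :=
    funext fun τ => hUdef _
  rw [hfeq]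
  exact hcomp.congr_deriv (by rw [gradCLM_apply]; rfl)

/-- transference between classical temperatures and OU temperatures via `φ`. -/
theorem transference_heat_OU (n : ℕ) (hn : 1 ≤ n) (E : Set (Spt n)) (hE : IsOpen E)
    (u : Spt n → ℝ) (hu : C21 (phiMap '' E) u)
    (hux : ∀ i : Fin n, ContinuousOn (pspace i u) (phiMap '' E))
    (U : Spt n → ℝ) (hUdef : ∀ z : Spt n, U z = u (phiMap z)) :
    C21 E U ∧
    (∀ z ∈ E,
      ptime U z - lap U z + 2 * xgrad U z =
        Real.exp (-4 * z.2) * (ptime u (phiMap z) - lap u (phiMap z))) ∧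
    (IsHeat (phiMap '' E) u ↔ IsOU E U) ∧
    (IsSubHeat (phiMap '' E) u ↔ IsSubOU E U) := by
  have hE' : IsOpen (phiMap '' E) := isOpen_phiMap_image hE
  have hφc : Continuous (phiMap : Spt n → Spt n) := phiMap_continuous
  have hmaps : Set.MapsTo phiMap E (phiMap '' E) := Set.mapsTo_image _ _
  have hder : ∀ z ∈ E, HasDerivAt (fun τ => U (z.1, τ))
      ((∑ i, pspace i u (phiMap z) * ((Real.exp (-2*z.2) * (-2)) * z.1 i)) +
        ptime u (phiMap z) * Real.exp (-4*z.2)) z.2 :=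
    fun z hz => ptime_transfer hE' u U hUdef hu.diff_x hux hu.diff_t z hz
  have hptU : ∀ z ∈ E, ptime U z =
      (∑ i, pspace i u (phiMap z) * ((Real.exp (-2*z.2) * (-2)) * z.1 i)) +
        ptime u (phiMap z) * Real.exp (-4*z.2) := fun z hz => (hder z hz).deriv
  have hpsU : ∀ (i : Fin n) (w : Spt n),
      pspace i U w = Real.exp (-2*w.2) * pspace i u (phiMap w) :=
    fun i w => pspace_transfer u U hUdef i w
  have hps2U : ∀ (i j : Fin n) (w : Spt n),
      pspace2 i j U w = Real.exp (-4*w.2) * pspace2 i j u (phiMap w) :=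
    fun i j w => pspace2_transfer u U hUdef i j w
  have hlapU : ∀ w : Spt n, lap U w = Real.exp (-4*w.2) * lap u (phiMap w) := by
    intro w
    unfold lap
    rw [Finset.mul_sum]
    exact Finset.sum_congr rfl fun i _ => hps2U i i w
  have hxgU : ∀ w : Spt n, xgrad U w =
      ∑ i, w.1 i * (Real.exp (-2*w.2) * pspace i u (phiMap w)) := by
    intro w
    unfold xgrad
    exact Finset.sum_congr rfl fun i _ => by rw [hpsU]
  have hid : ∀ z ∈ E, ptime U z - lap U z + 2 * xgrad U z =
      Real.exp (-4 * z.2) * (ptime u (phiMap z) - lap u (phiMap z)) := by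
    intro z hz
    rw [hptU z hz, hlapU z, hxgU z]
    have hsum : (∑ i, pspace i u (phiMap z) * ((Real.exp (-2*z.2) * (-2)) * z.1 i)) +
        2 * (∑ i, z.1 i * (Real.exp (-2*z.2) * pspace i u (phiMap z))) = 0 := by
      rw [Finset.mul_sum, ← Finset.sum_add_distrib]
      exact Finset.sum_eq_zero fun i _ => by ring
    linear_combination hsum
  refine ⟨⟨fun z hz => (hder z hz).differentiableAt, ?_, ?_, ?_, ?_⟩, hid, ?_, ?_⟩
  · -- cont_t
    have hg : ContinuousOn (fun z : Spt n =>
        (∑ i, pspace i u (phiMap z) * ((Real.exp (-2*z.2) * (-2)) * z.1 i)) +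
          ptime u (phiMap z) * Real.exp (-4*z.2)) E := by
      apply ContinuousOn.add
      · apply continuousOn_finset_sum
        intro i _
        apply ContinuousOn.mul
        · exact (hux i).comp hφc.continuousOn hmaps
        · apply ContinuousOn.mul
          · exact ((Real.continuous_exp.comp (by fun_prop)).continuousOn).mul
              continuousOn_const
          · exact ((EuclideanSpace.proj i).continuous.comp continuous_fst).continuousOn
      · exact ((hu.cont_t).comp hφc.continuousOn hmaps).mul
          (Real.continuous_exp.comp (by fun_prop)).continuousOn
    exact hg.congr fun z hz => hptU z hz
  · -- diff_x
    intro z hz i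
    have hfun : (fun a => U (WithLp.toLp 2 (Function.update z.1 i a), z.2)) =
        (fun a => (fun b => u (WithLp.toLp 2 (Function.update ((phiMap z).1) i b), (phiMap z).2))
          (Real.exp (-2*z.2) * a)) := by
      funext a; rw [hUdef, update_phi]
    rw [hfun]
    have houter : DifferentiableAt ℝ
        (fun b => u (WithLp.toLp 2 (Function.update ((phiMap z).1) i b), (phiMap z).2))
        (Real.exp (-2*z.2) * z.1 i) := hu.diff_x (phiMap z) ⟨z, hz, rfl⟩ i
    have hinner : DifferentiableAt ℝ (fun a : ℝ => Real.exp (-2*z.2) * a) (z.1 i) := by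
      fun_prop
    show DifferentiableAt ℝ
      ((fun b => u (WithLp.toLp 2 (Function.update ((phiMap z).1) i b), (phiMap z).2)) ∘
        (fun a : ℝ => Real.exp (-2*z.2) * a)) (z.1 i)
    exact DifferentiableAt.comp (z.1 i) houter hinner
  · -- diff_xx
    intro z hz i j
    have hfun : (fun a => pspace j U (WithLp.toLp 2 (Function.update z.1 i a), z.2)) =
        (fun a => Real.exp (-2*z.2) *
          ((fun b => pspace j u (WithLp.toLp 2 (Function.update ((phiMap z).1) i b), (phiMap z).2))
            (Real.exp (-2*z.2) * a))) := by
      funext a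
      rw [hpsU j (WithLp.toLp 2 (Function.update z.1 i a), z.2)]
      show Real.exp (-2*z.2) * pspace j u (phiMap (WithLp.toLp 2 (Function.update z.1 i a), z.2)) = _
      rw [update_phi]
    rw [hfun]
    have houter : DifferentiableAt ℝ
        (fun b => pspace j u (WithLp.toLp 2 (Function.update ((phiMap z).1) i b), (phiMap z).2))
        (Real.exp (-2*z.2) * z.1 i) := hu.diff_xx (phiMap z) ⟨z, hz, rfl⟩ i j
    have hinner : DifferentiableAt ℝ (fun a : ℝ => Real.exp (-2*z.2) * a) (z.1 i) := by
      fun_prop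
    have hcomp : DifferentiableAt ℝ
        ((fun b => pspace j u (WithLp.toLp 2 (Function.update ((phiMap z).1) i b), (phiMap z).2)) ∘
          (fun a => Real.exp (-2*z.2) * a)) (z.1 i) :=
      DifferentiableAt.comp (z.1 i) houter hinner
    exact hcomp.const_mul _
  · -- cont_xx
    intro i j
    have hg : ContinuousOn (fun w : Spt n =>
        Real.exp (-4*w.2) * pspace2 i j u (phiMap w)) E :=
      ((Real.continuous_exp.comp (by fun_prop)).continuousOn).mul
        ((hu.cont_xx i j).comp hφc.continuousOn hmaps)
    exact hg.congr fun w hw => hps2U i j w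
  · -- IsHeat iff IsOU
    constructor
    · intro hheat z hz
      have h := hid z hz
      have h4 : ptime U z - lap U z + 2 * xgrad U z = 0 := by
        rw [h, hheat (phiMap z) ⟨z, hz, rfl⟩]; ring
      linarith
    · intro hou w hw
      obtain ⟨z, hz, rfl⟩ := hw
      have h := hid z hz
      have h2 := hou z hz
      have h3 : Real.exp (-4*z.2) * (ptime u (phiMap z) - lap u (phiMap z)) = 0 := by
        rw [← h]; linarith
      rcases mul_eq_zero.mp h3 with h4|h4
      · exact absurd h4 (Real.exp_ne_zero _)
      · linarith
  · -- IsSubHeat iff IsSubOU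
    constructor
    · intro hsub z hz
      have h := hid z hz
      have h2 := hsub (phiMap z) ⟨z, hz, rfl⟩
      have he := Real.exp_pos (-4*z.2)
      nlinarith [mul_nonneg he.le (by linarith : (0:ℝ) ≤ lap u (phiMap z) - ptime u (phiMap z))]
    · intro hou w hw
      obtain ⟨z, hz, rfl⟩ := hw
      have h := hid z hz
      have h2 := hou z hz
      have he := Real.exp_pos (-4*z.2)
      nlinarith [h, h2, he]
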